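/- Let there be 3 agents and a finite set M of indivisible chores with additive bi-valued cost functions taking values in {ε, 1} for some 0 ≤ ε < 1. If two of the three agents have identical cost functions (c_i(e) = c_j(e) for all items e, for some i ≠ j), then there exists an EFX allocation. -/

import Mathlib

open Finset

/-- Greedy descending allocation into 3 bundles gives a symmetric EFX partition
for a single cost function. -/
lemma build_aux {ι : Type*} [DecidableEq ι] (c : ι → ℝ) :
    ∀ l : List ι, l.Nodup → (∀ x ∈ l, 0 ≤ c x) →
      l.Pairwise (fun x y => c x ≤ c y) →
      ∃ P : Fin 3 → Finset ι,
        (∀ a b, a ≠ b → Disjoint (P a) (P b)) ∧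
        (Finset.univ.biUnion P = l.toFinset) ∧
        (∀ a b : Fin 3, ∀ e ∈ P a, ∑ f ∈ (P a).erase e, c f ≤ ∑ f ∈ P b, c f) := by
  intro l
  induction l with
  | nil => exact fun _ _ _ => ⟨fun _ => ∅, by simp, by ext x; simp, by simp⟩
  | cons a l ih =>
    intro hnd hnn hs
    obtain ⟨P, hdisj, hun, hefx⟩ := ih hnd.of_cons
      (fun x hx => hnn x (List.mem_cons_of_mem _ hx)) hs.of_cons
    obtain ⟨m, -, hm⟩ := Finset.exists_min_image Finset.univ
      (fun t => ∑ f ∈ P t, c f) ⟨0, mem_univ 0⟩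
    have hm' : ∀ t, ∑ f ∈ P m, c f ≤ ∑ f ∈ P t, c f := fun t => hm t (mem_univ t)
    have hal : a ∉ l := (List.nodup_cons.mp hnd).1
    have haP : ∀ t, a ∉ P t := by
      intro t ht
      have : a ∈ Finset.univ.biUnion P := Finset.mem_biUnion.mpr ⟨t, mem_univ t, ht⟩
      rw [hun, List.mem_toFinset] at this
      exact hal this
    have hsub : ∀ t, ∀ x ∈ P t, x ∈ l := by
      intro t x hx
      have : x ∈ Finset.univ.biUnion P := Finset.mem_biUnion.mpr ⟨t, mem_univ t, hx⟩
      rw [hun, List.mem_toFinset] at this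
      exact this
    have ha0 : 0 ≤ c a := hnn a (List.mem_cons_self)
    have hale : ∀ x ∈ l, c a ≤ c x := (List.pairwise_cons.mp hs).1
    refine ⟨Function.update P m (insert a (P m)), ?_, ?_, ?_⟩
    · intro x y hxy
      by_cases hx : x = m <;> by_cases hy : y = m
      · exact absurd (hx.trans hy.symm) hxy
      · rw [hx, Function.update_self, Function.update_of_ne hy]
        exact Finset.disjoint_insert_left.mpr ⟨haP y, hdisj m y (fun h => hy h.symm)⟩
      · rw [hy, Function.update_self, Function.update_of_ne hx]
        exact Finset.disjoint_insert_right.mpr ⟨haP x, hdisj x m (fun h => hx h)⟩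
      · rw [Function.update_of_ne hx, Function.update_of_ne hy]
        exact hdisj x y hxy
    · ext x
      simp only [Finset.mem_biUnion, mem_univ, true_and, List.toFinset_cons,
        Finset.mem_insert]
      constructor
      · rintro ⟨t, ht⟩
        by_cases htm : t = m
        · subst htm
          rw [Function.update_self, Finset.mem_insert] at ht
          rcases ht with h | h
          · exact Or.inl h
          · exact Or.inr (List.mem_toFinset.mpr (hsub t x h))
        · rw [Function.update_of_ne htm] at ht
          exact Or.inr (List.mem_toFinset.mpr (hsub t x ht))
      · rintro (h | h)
        · exact ⟨m, by rw [Function.update_self, h]; exact Finset.mem_insert_self a (P m)⟩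
        · rw [← hun] at h
          obtain ⟨t, -, ht⟩ := Finset.mem_biUnion.mp h
          refine ⟨t, ?_⟩
          by_cases htm : t = m
          · subst htm
            rw [Function.update_self]
            exact Finset.mem_insert_of_mem ht
          · rwa [Function.update_of_ne htm]
    · intro a' b' e he
      have hPle : ∀ b' : Fin 3, ∑ f ∈ P b', c f ≤
          ∑ f ∈ Function.update P m (insert a (P m)) b', c f := by
        intro b'
        by_cases hb : b' = m
        · subst hb
          rw [Function.update_self, Finset.sum_insert (haP b')]
          linarith
        · rw [Function.update_of_ne hb]
      by_cases ha' : a' = m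
      · subst ha'
        rw [Function.update_self] at he ⊢
        have hins : ∑ f ∈ insert a (P a'), c f = c a + ∑ f ∈ P a', c f :=
          Finset.sum_insert (haP a')
        have herase : ∑ f ∈ (insert a (P a')).erase e, c f + c e
            = ∑ f ∈ insert a (P a'), c f := Finset.sum_erase_add _ _ he
        have hce : c a ≤ c e := by
          rcases Finset.mem_insert.mp he with h | h
          · rw [h]
          · exact hale e (hsub a' e h)
        have h1 : ∑ f ∈ (insert a (P a')).erase e, c f ≤ ∑ f ∈ P a', c f := by
          linarith
        calc ∑ f ∈ (insert a (P a')).erase e, c f ≤ ∑ f ∈ P a', c f := h1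
          _ ≤ ∑ f ∈ P b', c f := hm' b'
          _ ≤ _ := hPle b'
      · rw [Function.update_of_ne ha'] at he ⊢
        calc ∑ f ∈ (P a').erase e, c f ≤ ∑ f ∈ P b', c f := hefx a' b' e he
          _ ≤ _ := hPle b'

lemma exists_sorted {ι : Type*} [DecidableEq ι] (c : ι → ℝ) (M : Finset ι) :
    ∃ l : List ι, l.Nodup ∧ l.toFinset = M ∧ l.Pairwise (fun x y => c x ≤ c y) := by
  classical
  haveI : IsTotal ι (fun x y => c x ≤ c y) := ⟨fun x y => le_total _ _⟩
  haveI : IsTrans ι (fun x y => c x ≤ c y) := ⟨fun _ _ _ => le_trans⟩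
  refine ⟨List.insertionSort (fun x y => c x ≤ c y) M.toList, ?_, ?_, ?_⟩
  · exact ((List.perm_insertionSort _ _).nodup_iff).mpr M.nodup_toList
  · rw [List.toFinset_eq_of_perm _ _ (List.perm_insertionSort _ M.toList),
      Finset.toList_toFinset]
  · exact List.pairwise_insertionSort _ _

theorem stmt_13 {ι : Type*} [DecidableEq ι] (M : Finset ι)
    (c : Fin 3 → ι → ℝ) (ε : ℝ) (hε0 : 0 ≤ ε) (hε1 : ε < 1)
    (hbi : ∀ i, ∀ e ∈ M, c i e = ε ∨ c i e = 1)
    (hsame : ∃ i j : Fin 3, i ≠ j ∧ ∀ e ∈ M, c i e = c j e) :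
    ∃ X : Fin 3 → Finset ι,
      (∀ i j, i ≠ j → Disjoint (X i) (X j)) ∧
      (Finset.univ.biUnion X = M) ∧
      (∀ i j : Fin 3, ∀ e ∈ X i,
        ∑ f ∈ (X i).erase e, c i f ≤ ∑ f ∈ X j, c i f) := by
  obtain ⟨i, j, hij, hsame⟩ := hsame
  have hnn : ∀ a : Fin 3, ∀ e ∈ M, 0 ≤ c a e := by
    intro a e he
    rcases hbi a e he with h | h <;> rw [h] <;> linarith
  obtain ⟨k, hki, hkj⟩ : ∃ k : Fin 3, k ≠ i ∧ k ≠ j := by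
    have h1 := i.isLt; have h2 := j.isLt
    rw [Ne, Fin.ext_iff] at hij
    refine ⟨⟨3 - i.val - j.val, by omega⟩, ?_, ?_⟩ <;>
      (rw [Ne, Fin.ext_iff]; simp only [Fin.val_mk]; omega)
  obtain ⟨l, hlnd, hlM, hls⟩ := exists_sorted (c i) M
  obtain ⟨P, hdisj, hun, hefx⟩ := build_aux (c i) l hlnd
    (fun x hx => hnn i x (hlM ▸ List.mem_toFinset.mpr hx)) hls
  rw [hlM] at hun
  have hsubM : ∀ t, P t ⊆ M := by
    intro t x hx
    exact hun ▸ Finset.mem_biUnion.mpr ⟨t, mem_univ t, hx⟩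
  obtain ⟨m, -, hm⟩ := Finset.exists_min_image Finset.univ
    (fun t => ∑ f ∈ P t, c k f) ⟨0, mem_univ 0⟩
  have hm' : ∀ t, ∑ f ∈ P m, c k f ≤ ∑ f ∈ P t, c k f := fun t => hm t (mem_univ t)
  set σ : Fin 3 ≃ Fin 3 := Equiv.swap k m with hσ
  refine ⟨fun a => P (σ a), ?_, ?_, ?_⟩
  · exact fun a b hab => hdisj _ _ (fun h => hab (σ.injective h))
  · rw [← hun]
    ext x
    simp only [Finset.mem_biUnion, mem_univ, true_and]
    exact ⟨fun ⟨a, h⟩ => ⟨σ a, h⟩, fun ⟨b, h⟩ => ⟨σ.symm b, by simpa using h⟩⟩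
  · intro a b e he
    have hcover : a = i ∨ a = j ∨ a = k := by
      have h1 := i.isLt; have h2 := j.isLt; have h3 := k.isLt; have h4 := a.isLt
      rw [Ne, Fin.ext_iff] at hij hki hkj
      rw [Fin.ext_iff, Fin.ext_iff, Fin.ext_iff]
      omega
    have hsum_eq : ∀ S : Finset ι, S ⊆ M → ∑ f ∈ S, c j f = ∑ f ∈ S, c i f :=
      fun S hS => Finset.sum_congr rfl fun x hx => (hsame x (hS hx)).symm
    rcases hcover with rfl | rfl | rfl
    · exact hefx _ _ e he
    · rw [hsum_eq _ ((Finset.erase_subset _ _).trans (hsubM _)),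
        hsum_eq _ (hsubM _)]
      exact hefx _ _ e he
    · have hσk : σ a = m := Equiv.swap_apply_left a m
      simp only at he ⊢
      rw [hσk] at he ⊢
      have herase : ∑ f ∈ (P m).erase e, c a f + c a e = ∑ f ∈ P m, c a f :=
        Finset.sum_erase_add _ _ he
      have h0 : 0 ≤ c a e := hnn a e (hsubM m he)
      calc ∑ f ∈ (P m).erase e, c a f ≤ ∑ f ∈ P m, c a f := by linarith
        _ ≤ ∑ f ∈ P (σ b), c a f := hm' (σ b)
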